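/- Let t and t' be ring terms in n variables (containing no ⊥ and no division). Then E_wcr,⊥ ⊢ t = t' if and only if for every field F and every valuation σ : Fin n → Option F, the evaluations of t and t' in the ⊥-enlargement of F are equal. (E_wcr,⊥ is a complete axiomatisation of the sumterm calculus of fields equipped with ⊥, equivalently of the sumterm calculus of common meadows.) -/

import Mathlib

universe u

/-- Ring-with-`⊥` terms in `n` variables: variables, constants `0`, `1` and `⊥`,
negation, addition and multiplication.  Terms avoiding the constructor `bot`
are the ring terms. -/
inductive RTerm (n : ℕ) : Type where
  | var : Fin n → RTerm n
  | zero : RTerm n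
  | one : RTerm n
  | bot : RTerm n
  | neg : RTerm n → RTerm n
  | add : RTerm n → RTerm n → RTerm n
  | mul : RTerm n → RTerm n → RTerm n

namespace RTerm

/-- Addition on the `⊥`-enlargement `Option R` of a commutative ring `R`. -/
def bAdd {R : Type u} [CommRing R] : Option R → Option R → Option R
  | some a, some b => some (a + b)
  | _, _ => none

/-- Multiplication on the `⊥`-enlargement `Option R` of a commutative ring `R`. -/
def bMul {R : Type u} [CommRing R] : Option R → Option R → Option R
  | some a, some b => some (a * b)
  | _, _ => none

/-- Negation on the `⊥`-enlargement `Option R` of a commutative ring `R`. -/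
def bNeg {R : Type u} [CommRing R] : Option R → Option R
  | some a => some (-a)
  | none => none

/-- Evaluation of a ring-with-`⊥` term in the `⊥`-enlargement `Option R` of a
commutative ring `R`, under a valuation `σ : Fin n → Option R`. -/
def evalB {n : ℕ} {R : Type u} [CommRing R] (σ : Fin n → Option R) :
    RTerm n → Option R
  | var i => σ i
  | zero => some 0
  | one => some 1
  | bot => none
  | neg t => bNeg (t.evalB σ)
  | add t s => bAdd (t.evalB σ) (s.evalB σ)
  | mul t s => bMul (t.evalB σ) (s.evalB σ)

/-- Derivability in equational logic from the axioms `E_wcr,⊥`: the least relation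
containing all substitution instances of the eleven axioms that is reflexive,
symmetric, transitive and closed under the term-forming operations. -/
inductive DerivWcr {n : ℕ} : RTerm n → RTerm n → Prop
  | add_assoc (x y z : RTerm n) : DerivWcr ((x.add y).add z) (x.add (y.add z))
  | add_comm (x y : RTerm n) : DerivWcr (x.add y) (y.add x)
  | add_zero (x : RTerm n) : DerivWcr (x.add zero) x
  | add_neg (x : RTerm n) : DerivWcr (x.add x.neg) (zero.mul x)
  | mul_assoc (x y z : RTerm n) : DerivWcr (x.mul (y.mul z)) ((x.mul y).mul z)
  | mul_comm (x y : RTerm n) : DerivWcr (x.mul y) (y.mul x)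
  | one_mul (x : RTerm n) : DerivWcr (one.mul x) x
  | mul_add (x y z : RTerm n) : DerivWcr (x.mul (y.add z)) ((x.mul y).add (x.mul z))
  | neg_neg (x : RTerm n) : DerivWcr x.neg.neg x
  | zero_mul_add (x y : RTerm n) : DerivWcr (zero.mul (x.add y)) (zero.mul (x.mul y))
  | add_bot (x : RTerm n) : DerivWcr (x.add bot) bot
  | refl (x : RTerm n) : DerivWcr x x
  | symm {x y : RTerm n} : DerivWcr x y → DerivWcr y x
  | trans {x y z : RTerm n} : DerivWcr x y → DerivWcr y z → DerivWcr x z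
  | neg_congr {x y : RTerm n} : DerivWcr x y → DerivWcr x.neg y.neg
  | add_congr {x x' y y' : RTerm n} :
      DerivWcr x x' → DerivWcr y y' → DerivWcr (x.add y) (x'.add y')
  | mul_congr {x x' y y' : RTerm n} :
      DerivWcr x x' → DerivWcr y y' → DerivWcr (x.mul y) (x'.mul y')

/-- A ring-with-`⊥` term is `⊥`-free (i.e. a ring term) if it contains no
occurrence of the constant `⊥`. -/
def BotFree {n : ℕ} : RTerm n → Prop
  | var _ => True
  | zero => True
  | one => True
  | bot => False
  | neg t => BotFree t
  | add t s => BotFree t ∧ BotFree s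
  | mul t s => BotFree t ∧ BotFree s

-- ### auxiliary definitions

variable {n : ℕ}

/-- variables occurring in a term -/
def vars : RTerm n → Finset (Fin n)
  | var i => {i}
  | zero => ∅
  | one => ∅
  | bot => ∅
  | neg t => vars t
  | add t s => vars t ∪ vars s
  | mul t s => vars t ∪ vars s

/-- evaluation in a commutative ring (`bot` is mapped to `0`, irrelevant for
bot-free terms) -/
def evalR {R : Type*} [CommRing R] (τ : Fin n → R) : RTerm n → R
  | var i => τ i
  | zero => 0
  | one => 1
  | bot => 0
  | neg t => -(evalR τ t)
  | add t s => evalR τ t + evalR τ s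
  | mul t s => evalR τ t * evalR τ s

theorem sound {R : Type u} [CommRing R] {t t' : RTerm n} (h : DerivWcr t t')
    (σ : Fin n → Option R) : t.evalB σ = t'.evalB σ := by
  induction h with
  | add_assoc x y z =>
      rcases hx : x.evalB σ with _|a <;> rcases hy : y.evalB σ with _|b <;>
        rcases hz : z.evalB σ with _|c <;>
        simp [evalB, bAdd, hx, hy, hz, add_assoc]
  | add_comm x y =>
      rcases hx : x.evalB σ with _|a <;> rcases hy : y.evalB σ with _|b <;>
        simp [evalB, bAdd, hx, hy, add_comm]
  | add_zero x =>
      rcases hx : x.evalB σ with _|a <;> simp [evalB, bAdd, hx]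
  | add_neg x =>
      rcases hx : x.evalB σ with _|a <;> simp [evalB, bAdd, bNeg, bMul, hx]
  | mul_assoc x y z =>
      rcases hx : x.evalB σ with _|a <;> rcases hy : y.evalB σ with _|b <;>
        rcases hz : z.evalB σ with _|c <;>
        simp [evalB, bMul, hx, hy, hz, mul_assoc]
  | mul_comm x y =>
      rcases hx : x.evalB σ with _|a <;> rcases hy : y.evalB σ with _|b <;>
        simp [evalB, bMul, hx, hy, mul_comm]
  | one_mul x =>
      rcases hx : x.evalB σ with _|a <;> simp [evalB, bMul, hx]
  | mul_add x y z =>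
      rcases hx : x.evalB σ with _|a <;> rcases hy : y.evalB σ with _|b <;>
        rcases hz : z.evalB σ with _|c <;>
        simp [evalB, bAdd, bMul, hx, hy, hz, mul_add]
  | neg_neg x =>
      rcases hx : x.evalB σ with _|a <;> simp [evalB, bNeg, hx]
  | zero_mul_add x y =>
      rcases hx : x.evalB σ with _|a <;> rcases hy : y.evalB σ with _|b <;>
        simp [evalB, bAdd, bMul, hx, hy]
  | add_bot x =>
      rcases hx : x.evalB σ with _|a <;> simp [evalB, bAdd, hx]
  | refl x => rfl
  | symm _ ih => exact ih.symm
  | trans _ _ ih1 ih2 => exact ih1.trans ih2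
  | neg_congr _ ih => simp [evalB, ih]
  | add_congr _ _ ih1 ih2 => simp [evalB, ih1, ih2]
  | mul_congr _ _ ih1 ih2 => simp [evalB, ih1, ih2]


-- ### toolkit of derived equations

namespace DerivWcr

local infix:50 " ∼ " => DerivWcr

variable {x y z w a b c : RTerm n}

theorem dCongrL (h : x ∼ y) : x.add z ∼ y.add z := add_congr h (refl z)
theorem dCongrR (h : x ∼ y) : z.add x ∼ z.add y := add_congr (refl z) h
theorem mCongrL (h : x ∼ y) : x.mul z ∼ y.mul z := mul_congr h (refl z)
theorem mCongrR (h : x ∼ y) : z.mul x ∼ z.mul y := mul_congr (refl z) h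

theorem zero_add' (x : RTerm n) : zero.add x ∼ x := (add_comm zero x).trans (add_zero x)
theorem mul_one' (x : RTerm n) : x.mul one ∼ x := (mul_comm x one).trans (one_mul x)

/-- `x + 0·x ∼ x` -/
theorem absorb (x : RTerm n) : x.add (zero.mul x) ∼ x :=
  (add_congr (symm (mul_one' x)) (mul_comm zero x)).trans <|
    (symm (mul_add x one zero)).trans <|
      (mCongrR (add_zero one)).trans (mul_one' x)

/-- `0·1 ∼ 0` -/
theorem zm_one : (zero : RTerm n).mul one ∼ zero := (mul_comm zero one).trans (one_mul zero)

/-- `0·0 ∼ 0` -/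
theorem zm_zero : (zero : RTerm n).mul zero ∼ zero :=
  (symm (zero_add' (zero.mul zero))).trans (absorb zero)

/-- `0·(x+y) ∼ 0·x + 0·y` -/
theorem zm_add (x y : RTerm n) : zero.mul (x.add y) ∼ (zero.mul x).add (zero.mul y) :=
  mul_add zero x y

/-- `0·(x·y) ∼ 0·x + 0·y` -/
theorem zm_mul (x y : RTerm n) : zero.mul (x.mul y) ∼ (zero.mul x).add (zero.mul y) :=
  (symm (zero_mul_add x y)).trans (mul_add zero x y)

/-- `0·x + 0·x ∼ 0·x` -/
theorem zm_idem (x : RTerm n) : (zero.mul x).add (zero.mul x) ∼ zero.mul x :=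
  (add_congr (mul_comm zero x) (mul_comm zero x)).trans <|
    (symm (mul_add x zero zero)).trans <|
      ((mCongrR (add_zero zero)).trans (mul_comm x zero))

/-- `0·x + 0·(-x) ∼ 0·x` -/
theorem zm_addneg (x : RTerm n) : (zero.mul x).add (zero.mul x.neg) ∼ zero.mul x :=
  (symm (mul_add zero x x.neg)).trans <|
    (mCongrR (add_neg x)).trans <|
      (mul_assoc zero zero x).trans (mCongrL zm_zero)

/-- `0·(-x) ∼ 0·x` -/
theorem zm_neg (x : RTerm n) : zero.mul x.neg ∼ zero.mul x :=
  (symm (zm_addneg x.neg)).trans <|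
    (dCongrR (mCongrR (neg_neg x))).trans <|
      (add_comm _ _).trans (zm_addneg x)

/-- `x + (-1)·x ∼ 0·x` -/
theorem add_negone_mul (x : RTerm n) : x.add (one.neg.mul x) ∼ zero.mul x :=
  (add_congr (symm (mul_one' x)) (mul_comm one.neg x)).trans <|
    (symm (mul_add x one one.neg)).trans <|
      (mCongrR (add_neg one)).trans <|
        (mCongrR zm_one).trans (mul_comm x zero)

/-- `0·((-1)·x) ∼ 0·x` -/
theorem zm_negone_mul (x : RTerm n) : zero.mul (one.neg.mul x) ∼ zero.mul x :=
  (zm_mul one.neg x).trans <|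
    (dCongrL ((zm_neg one).trans zm_one)).trans (zero_add' _)

/-- `-x ∼ (-1)·x` -/
theorem neg_eq_negone_mul (x : RTerm n) : x.neg ∼ one.neg.mul x :=
  (symm (absorb x.neg)).trans <|
    (dCongrR (zm_neg x)).trans <|
      (dCongrR (symm (add_negone_mul x))).trans <|
        (symm (add_assoc x.neg x (one.neg.mul x))).trans <|
          (dCongrL (add_comm x.neg x)).trans <|
            (dCongrL (add_neg x)).trans <|
              (dCongrL (symm (zm_negone_mul x))).trans <|
                (add_comm _ _).trans (absorb (one.neg.mul x))

/-- `-(x+y) ∼ -x + -y` -/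
theorem neg_add' (x y : RTerm n) : (x.add y).neg ∼ x.neg.add y.neg :=
  (neg_eq_negone_mul (x.add y)).trans <|
    (mul_add one.neg x y).trans
      (add_congr (symm (neg_eq_negone_mul x)) (symm (neg_eq_negone_mul y)))

/-- `-(0·s) ∼ 0·s` -/
theorem neg_zm (s : RTerm n) : (zero.mul s).neg ∼ zero.mul s :=
  (neg_eq_negone_mul (zero.mul s)).trans <|
    (mul_assoc one.neg zero s).trans <|
      (mCongrL ((mul_comm one.neg zero).trans ((zm_neg one).trans zm_one))).trans (refl _)

end DerivWcr


/-- formal sum of a list of variables -/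
def lsum : List (Fin n) → RTerm n
  | [] => zero
  | i :: r => (var i).add (lsum r)

namespace DerivWcr

local infix:50 " ∼ " => DerivWcr

variable {x y z w a b u : RTerm n}

theorem habs1 (h : w.add a ∼ a) : w.add (a.add b) ∼ a.add b :=
  (symm (add_assoc w a b)).trans (dCongrL h)

theorem habs2 (h : w.add b ∼ b) : w.add (a.add b) ∼ a.add b :=
  (dCongrR (add_comm a b)).trans ((habs1 h).trans (add_comm b a))

theorem hconj {s s' : RTerm n} (h : s ∼ s') (h' : w.add s' ∼ s') : w.add s ∼ s :=
  (dCongrR h).trans (h'.trans (symm h))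

/-- `i ∈ vars t → 0·xᵢ + 0·t ∼ 0·t` (for bot-free `t`) -/
theorem zm_var_absorb {t : RTerm n} (hb : BotFree t) {i : Fin n} (hi : i ∈ t.vars) :
    (zero.mul (var i)).add (zero.mul t) ∼ zero.mul t := by
  induction t with
  | var j =>
      simp [vars] at hi
      subst hi
      exact zm_idem _
  | zero => simp [vars] at hi
  | one => simp [vars] at hi
  | bot => exact absurd hb id
  | neg t ih =>
      exact hconj (zm_neg t) (ih hb (by simpa [vars] using hi))
  | add a b iha ihb =>
      rcases hb with ⟨hba, hbb⟩
      refine hconj (zm_add a b) ?_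
      rcases Finset.mem_union.mp (by simpa [vars] using hi) with h | h
      · exact habs1 (iha hba h)
      · exact habs2 (ihb hbb h)
  | mul a b iha ihb =>
      rcases hb with ⟨hba, hbb⟩
      refine hconj (zm_mul a b) ?_
      rcases Finset.mem_union.mp (by simpa [vars] using hi) with h | h
      · exact habs1 (iha hba h)
      · exact habs2 (ihb hbb h)

/-- `i ∈ l → 0·xᵢ + 0·(Σ l) ∼ 0·(Σ l)` -/
theorem zm_var_lsum {l : List (Fin n)} {i : Fin n} (hi : i ∈ l) :
    (zero.mul (var i)).add (zero.mul (lsum l)) ∼ zero.mul (lsum l) := by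
  induction l with
  | nil => simp at hi
  | cons j r ih =>
      refine hconj (zm_add (var j) (lsum r)) ?_
      rcases List.mem_cons.mp hi with h | h
      · subst h
        exact habs1 (zm_idem _)
      · exact habs2 (ih h)

/-- `0·u + 0·(Σ l) ∼ 0·(Σ l)` for bot-free `u` with all variables in `l` -/
theorem zm_absorb_into_lsum {u : RTerm n} (hb : BotFree u) {l : List (Fin n)}
    (hv : ∀ i ∈ u.vars, i ∈ l) :
    (zero.mul u).add (zero.mul (lsum l)) ∼ zero.mul (lsum l) := by
  induction u with
  | var i => exact zm_var_lsum (hv i (by simp [vars]))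
  | zero => exact (dCongrL zm_zero).trans (zero_add' _)
  | one => exact (dCongrL zm_one).trans (zero_add' _)
  | bot => exact absurd hb id
  | neg t ih => exact (dCongrL (zm_neg t)).trans (ih hb (by simpa [vars] using hv))
  | add a b iha ihb =>
      rcases hb with ⟨hba, hbb⟩
      have hva : ∀ i ∈ a.vars, i ∈ l := fun i h => hv i (by simp [vars, h])
      have hvb : ∀ i ∈ b.vars, i ∈ l := fun i h => hv i (by simp [vars, h])
      exact (dCongrL (zm_add a b)).trans <|
        (add_assoc _ _ _).trans <| (dCongrR (ihb hbb hvb)).trans (iha hba hva)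
  | mul a b iha ihb =>
      rcases hb with ⟨hba, hbb⟩
      have hva : ∀ i ∈ a.vars, i ∈ l := fun i h => hv i (by simp [vars, h])
      have hvb : ∀ i ∈ b.vars, i ∈ l := fun i h => hv i (by simp [vars, h])
      exact (dCongrL (zm_mul a b)).trans <|
        (add_assoc _ _ _).trans <| (dCongrR (ihb hbb hvb)).trans (iha hba hva)

/-- `0·t + 0·(Σ l) ∼ 0·t` when every variable of `l` occurs in `t` (bot-free) -/
theorem zm_absorb_lsum_into {t : RTerm n} (hb : BotFree t) {l : List (Fin n)}
    (hv : ∀ i ∈ l, i ∈ t.vars) :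
    (zero.mul t).add (zero.mul (lsum l)) ∼ zero.mul t := by
  induction l with
  | nil => exact (dCongrR zm_zero).trans (add_zero _)
  | cons j r ih =>
      have hj : j ∈ t.vars := hv j (by simp)
      refine (dCongrR (zm_add (var j) (lsum r))).trans ?_
      refine (symm (add_assoc _ _ _)).trans ?_
      refine (dCongrL ((add_comm _ _).trans (zm_var_absorb hb hj))).trans ?_
      exact ih fun i h => hv i (List.mem_cons_of_mem _ h)

/-- `t + 0·(Σ l) ∼ t` when every variable of `l` occurs in `t` (bot-free) -/
theorem pad_self {t : RTerm n} (hb : BotFree t) {l : List (Fin n)}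
    (hv : ∀ i ∈ l, i ∈ t.vars) :
    t.add (zero.mul (lsum l)) ∼ t :=
  (dCongrL (symm (absorb t))).trans <|
    (add_assoc _ _ _).trans <|
      (dCongrR (zm_absorb_lsum_into hb hv)).trans (absorb t)

end DerivWcr


theorem botFree_lsum (l : List (Fin n)) : BotFree (lsum l) := by
  induction l with
  | nil => trivial
  | cons j r ih => exact ⟨trivial, ih⟩

theorem mem_vars_lsum {l : List (Fin n)} : ∀ i ∈ (lsum l).vars, i ∈ l := by
  induction l with
  | nil => simp [lsum, vars]
  | cons j r ih =>
      intro i hi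
      have : i = j ∨ i ∈ (lsum r).vars := by simpa [lsum, vars] using hi
      rcases this with h | h
      · simp [h]
      · exact List.mem_cons_of_mem _ (ih i h)

namespace DerivWcr

local infix:50 " ∼ " => DerivWcr

/-- `Z + Z ∼ Z` -/
theorem zZ (l : List (Fin n)) :
    (zero.mul (lsum l)).add (zero.mul (lsum l)) ∼ zero.mul (lsum l) := zm_idem _

/-- `(a+b) + Z ∼ (a+Z) + (b+Z)` -/
theorem pad_add_split (l : List (Fin n)) (a b : RTerm n) :
    (a.add b).add (zero.mul (lsum l)) ∼
      (a.add (zero.mul (lsum l))).add (b.add (zero.mul (lsum l)))  := by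
  set Z := zero.mul (lsum l)
  exact (dCongrR (symm (zZ l))).trans <|
    (symm (add_assoc (a.add b) Z Z)).trans <|
      (dCongrL (add_assoc a b Z)).trans <|
        (add_assoc a (b.add Z) Z).trans <|
          (dCongrR (add_comm (b.add Z) Z)).trans (symm (add_assoc a Z (b.add Z)))

/-- `u·Z + Z ∼ Z` for bot-free `u` with variables in `l` -/
theorem mulZ_absorb {u : RTerm n} (hb : BotFree u) {l : List (Fin n)}
    (hv : ∀ i ∈ u.vars, i ∈ l) :
    (u.mul (zero.mul (lsum l))).add (zero.mul (lsum l)) ∼ zero.mul (lsum l) := by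
  refine (dCongrL (mul_comm u _)).trans ?_
  refine (dCongrL (symm (DerivWcr.mul_assoc zero (lsum l) u))).trans ?_
  refine zm_absorb_into_lsum (u := (lsum l).mul u) ⟨botFree_lsum l, hb⟩ ?_
  intro i hi
  rcases Finset.mem_union.mp (by simpa [vars] using hi) with h | h
  · exact mem_vars_lsum i h
  · exact hv i h

/-- `(w + u) + Z ∼ w + Z` when `u + Z ∼ Z` -/
theorem collapse {l : List (Fin n)} {w u : RTerm n}
    (h : u.add (zero.mul (lsum l)) ∼ zero.mul (lsum l)) :
    (w.add u).add (zero.mul (lsum l)) ∼ w.add (zero.mul (lsum l)) :=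
  (add_assoc _ _ _).trans (dCongrR h)

/-- `(a+Z)(b+Z) + Z ∼ ab + Z` for carrier elements -/
theorem pad_mul_collapse {a b : RTerm n} (hba : BotFree a) (hbb : BotFree b)
    {l : List (Fin n)} (hva : ∀ i ∈ a.vars, i ∈ l) (hvb : ∀ i ∈ b.vars, i ∈ l) :
    ((a.add (zero.mul (lsum l))).mul (b.add (zero.mul (lsum l)))).add (zero.mul (lsum l)) ∼
      (a.mul b).add (zero.mul (lsum l)) := by
  have hbZ : BotFree (zero.mul (lsum l) : RTerm n) := ⟨trivial, botFree_lsum l⟩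
  have hvZ : ∀ i ∈ (zero.mul (lsum l) : RTerm n).vars, i ∈ l := by
    intro i hi
    refine mem_vars_lsum i ?_
    simpa [vars] using hi
  refine (dCongrL (mul_add (a.add (zero.mul (lsum l))) b (zero.mul (lsum l)))).trans ?_
  refine (collapse (mulZ_absorb (u := a.add (zero.mul (lsum l))) ⟨hba, hbZ⟩ ?_)).trans ?_
  · intro i hi
    rcases Finset.mem_union.mp (by simpa [vars] using hi) with h | h
    · exact hva i h
    · exact mem_vars_lsum i h
  refine (dCongrL ((mul_comm (a.add (zero.mul (lsum l))) b).trans ((mul_add b a (zero.mul (lsum l))).trans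
    (dCongrL (mul_comm b a))))).trans ?_
  exact collapse (mulZ_absorb hbb hvb)

end DerivWcr

-- ### the quotient ring

/-- the padded term `t + 0·(Σ l)` -/
def Pad (l : List (Fin n)) (t : RTerm n) : RTerm n := t.add (zero.mul (lsum l))

/-- carrier: bot-free terms with variables among `l` -/
def Car (n : ℕ) (l : List (Fin n)) : Type :=
  {t : RTerm n // BotFree t ∧ ∀ i ∈ t.vars, i ∈ l}

instance carSetoid (n : ℕ) (l : List (Fin n)) : Setoid (Car n l) where
  r a b := DerivWcr (Pad l a.1) (Pad l b.1)
  iseqv := ⟨fun _ => .refl _, .symm, .trans⟩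

/-- the quotient ring of bot-free terms with variables among `l` -/
def Q (n : ℕ) (l : List (Fin n)) : Type := Quotient (carSetoid n l)

namespace Car

variable {l : List (Fin n)}

def cZero : Car n l := ⟨zero, trivial, by simp [vars]⟩
def cOne : Car n l := ⟨one, trivial, by simp [vars]⟩
def cNeg (a : Car n l) : Car n l := ⟨a.1.neg, a.2.1, by simpa [vars] using a.2.2⟩
def cAdd (a b : Car n l) : Car n l :=
  ⟨a.1.add b.1, ⟨a.2.1, b.2.1⟩, by
    intro i hi
    rcases Finset.mem_union.mp (by simpa [vars] using hi) with h | h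
    · exact a.2.2 i h
    · exact b.2.2 i h⟩
def cMul (a b : Car n l) : Car n l :=
  ⟨a.1.mul b.1, ⟨a.2.1, b.2.1⟩, by
    intro i hi
    rcases Finset.mem_union.mp (by simpa [vars] using hi) with h | h
    · exact a.2.2 i h
    · exact b.2.2 i h⟩

end Car

namespace Q

open DerivWcr

variable {l : List (Fin n)}

instance : Zero (Q n l) := ⟨Quotient.mk _ Car.cZero⟩
instance : One (Q n l) := ⟨Quotient.mk _ Car.cOne⟩

instance : Neg (Q n l) :=
  ⟨Quotient.map Car.cNeg (by
    rintro a b (h : DerivWcr (Pad l a.1) (Pad l b.1))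
    show DerivWcr (Pad l a.1.neg) (Pad l b.1.neg)
    unfold Pad at *
    have key : ∀ c : RTerm n,
        DerivWcr ((c.add (zero.mul (lsum l))).neg.add (zero.mul (lsum l)))
          (c.neg.add (zero.mul (lsum l))) := fun c =>
      (dCongrL ((neg_add' _ _).trans (dCongrR (neg_zm _)))).trans
        ((DerivWcr.add_assoc _ _ _).trans (dCongrR (zZ l)))
    exact ((key a.1).symm.trans (dCongrL (DerivWcr.neg_congr h))).trans (key b.1))⟩

instance : Add (Q n l) :=
  ⟨Quotient.map₂ Car.cAdd (by
    rintro a a' (h1 : DerivWcr (Pad l a.1) (Pad l a'.1))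
      b b' (h2 : DerivWcr (Pad l b.1) (Pad l b'.1))
    show DerivWcr (Pad l (a.1.add b.1)) (Pad l (a'.1.add b'.1))
    unfold Pad at *
    exact (pad_add_split l a.1 b.1).trans
      ((DerivWcr.add_congr h1 h2).trans (DerivWcr.symm (pad_add_split l a'.1 b'.1))))⟩

instance : Mul (Q n l) :=
  ⟨Quotient.map₂ Car.cMul (by
    rintro a a' (h1 : DerivWcr (Pad l a.1) (Pad l a'.1))
      b b' (h2 : DerivWcr (Pad l b.1) (Pad l b'.1))
    show DerivWcr (Pad l (a.1.mul b.1)) (Pad l (a'.1.mul b'.1))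
    unfold Pad at *
    exact (DerivWcr.symm (pad_mul_collapse a.2.1 b.2.1 a.2.2 b.2.2)).trans
      ((dCongrL (DerivWcr.mul_congr h1 h2)).trans
        (pad_mul_collapse a'.2.1 b'.2.1 a'.2.2 b'.2.2)))⟩

instance instCommRing : CommRing (Q n l) :=
  CommRing.ofMinimalAxioms
    (fun a b c => by
      refine Quotient.inductionOn₃ a b c fun a b c => Quotient.sound ?_
      exact dCongrL (DerivWcr.add_assoc a.1 b.1 c.1))
    (fun a => by
      refine Quotient.inductionOn a fun a => Quotient.sound ?_
      exact dCongrL (zero_add' a.1))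
    (fun a => by
      refine Quotient.inductionOn a fun a => Quotient.sound ?_
      show DerivWcr (Pad l (a.1.neg.add a.1)) (Pad l zero)
      unfold Pad
      refine (dCongrL ((DerivWcr.add_comm _ _).trans (DerivWcr.add_neg a.1))).trans ?_
      exact (zm_absorb_into_lsum a.2.1 a.2.2).trans (DerivWcr.symm (zero_add' _)))
    (fun a b c => by
      refine Quotient.inductionOn₃ a b c fun a b c => Quotient.sound ?_
      exact dCongrL (DerivWcr.symm (DerivWcr.mul_assoc a.1 b.1 c.1)))
    (fun a b => by
      refine Quotient.inductionOn₂ a b fun a b => Quotient.sound ?_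
      exact dCongrL (DerivWcr.mul_comm a.1 b.1))
    (fun a => by
      refine Quotient.inductionOn a fun a => Quotient.sound ?_
      exact dCongrL (DerivWcr.one_mul a.1))
    (fun a b c => by
      refine Quotient.inductionOn₃ a b c fun a b c => Quotient.sound ?_
      exact dCongrL (DerivWcr.mul_add a.1 b.1 c.1))

end Q


-- ### evaluation lemmas

theorem bAdd_eq_none {R : Type u} [CommRing R] {a b : Option R} :
    bAdd a b = none ↔ a = none ∨ b = none := by
  cases a <;> cases b <;> simp [bAdd]

theorem bMul_eq_none {R : Type u} [CommRing R] {a b : Option R} :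
    bMul a b = none ↔ a = none ∨ b = none := by
  cases a <;> cases b <;> simp [bMul]

theorem bNeg_eq_none {R : Type u} [CommRing R] {a : Option R} :
    bNeg a = none ↔ a = none := by
  cases a <;> simp [bNeg]

theorem evalB_none {R : Type u} [CommRing R] {σ : Fin n → Option R} {t : RTerm n}
    (hb : BotFree t) : t.evalB σ = none ↔ ∃ i ∈ t.vars, σ i = none := by
  induction t with
  | var i => simp [evalB, vars]
  | zero => simp [evalB, vars]
  | one => simp [evalB, vars]
  | bot => exact absurd hb id
  | neg a ih => simpa [evalB, bNeg_eq_none, vars] using ih hb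
  | add a b iha ihb =>
      rcases hb with ⟨h1, h2⟩
      simp only [evalB, bAdd_eq_none, iha h1, ihb h2, vars]
      constructor
      · rintro (⟨i, hi, hn⟩ | ⟨i, hi, hn⟩)
        exacts [⟨i, Finset.mem_union.mpr (Or.inl hi), hn⟩,
          ⟨i, Finset.mem_union.mpr (Or.inr hi), hn⟩]
      · rintro ⟨i, hi, hn⟩
        rcases Finset.mem_union.mp hi with hh | hh
        exacts [Or.inl ⟨i, hh, hn⟩, Or.inr ⟨i, hh, hn⟩]
  | mul a b iha ihb =>
      rcases hb with ⟨h1, h2⟩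
      simp only [evalB, bMul_eq_none, iha h1, ihb h2, vars]
      constructor
      · rintro (⟨i, hi, hn⟩ | ⟨i, hi, hn⟩)
        exacts [⟨i, Finset.mem_union.mpr (Or.inl hi), hn⟩,
          ⟨i, Finset.mem_union.mpr (Or.inr hi), hn⟩]
      · rintro ⟨i, hi, hn⟩
        rcases Finset.mem_union.mp hi with hh | hh
        exacts [Or.inl ⟨i, hh, hn⟩, Or.inr ⟨i, hh, hn⟩]

theorem evalB_some {R : Type u} [CommRing R] (τ : Fin n → R) {t : RTerm n}
    (hb : BotFree t) : t.evalB (fun i => some (τ i)) = some (evalR τ t) := by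
  induction t with
  | var i => rfl
  | zero => rfl
  | one => rfl
  | bot => exact absurd hb id
  | neg a ih => simp [evalB, evalR, bNeg, ih hb]
  | add a b iha ihb => simp [evalB, evalR, bAdd, iha hb.1, ihb hb.2]
  | mul a b iha ihb => simp [evalB, evalR, bMul, iha hb.1, ihb hb.2]

theorem map_evalR {R S : Type*} [CommRing R] [CommRing S] (g : R →+* S)
    (τ : Fin n → R) (t : RTerm n) :
    evalR (fun i => g (τ i)) t = g (evalR τ t) := by
  induction t with
  | var i => rfl
  | zero => simp [evalR]
  | one => simp [evalR]
  | bot => simp [evalR]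
  | neg a ih => simp [evalR, ih]
  | add a b iha ihb => simp [evalR, iha, ihb]
  | mul a b iha ihb => simp [evalR, iha, ihb]

-- ### evaluating a term in the quotient ring gives its own class

def Car.varC {l : List (Fin n)} (i : Fin n) (hi : i ∈ l) : Car n l :=
  ⟨var i, trivial, by
    intro j hj
    simp [vars] at hj
    subst hj
    exact hi⟩

/-- the canonical valuation into the quotient ring -/
def qVar (l : List (Fin n)) : Fin n → Q n l := fun i =>
  if hi : i ∈ l then Quotient.mk _ (Car.varC i hi) else 0

theorem evalR_qVar {l : List (Fin n)} :
    ∀ {t : RTerm n} (hb : BotFree t) (hv : ∀ i ∈ t.vars, i ∈ l),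
      evalR (qVar l) t = Quotient.mk _ (⟨t, hb, hv⟩ : Car n l) := by
  intro t
  induction t with
  | var i =>
      intro hb hv
      have hi : i ∈ l := hv i (by simp [vars])
      show qVar l i = _
      refine (dif_pos hi).trans ?_
      exact Quotient.sound (DerivWcr.refl _)
  | zero => exact fun hb hv => Quotient.sound (DerivWcr.refl _)
  | one => exact fun hb hv => Quotient.sound (DerivWcr.refl _)
  | bot => exact fun hb _ => absurd hb id
  | neg a ih =>
      intro hb hv
      have hv' : ∀ i ∈ a.vars, i ∈ l := by simpa [vars] using hv
      show -(evalR (qVar l) a) = _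
      rw [ih hb hv']
      exact Quotient.sound (DerivWcr.refl _)
  | add a b iha ihb =>
      intro hb hv
      have hva : ∀ i ∈ a.vars, i ∈ l := fun i h => hv i (by simp [vars, h])
      have hvb : ∀ i ∈ b.vars, i ∈ l := fun i h => hv i (by simp [vars, h])
      show (evalR (qVar l) a) + (evalR (qVar l) b) = _
      rw [iha hb.1 hva, ihb hb.2 hvb]
      exact Quotient.sound (DerivWcr.refl _)
  | mul a b iha ihb =>
      intro hb hv
      have hva : ∀ i ∈ a.vars, i ∈ l := fun i h => hv i (by simp [vars, h])
      have hvb : ∀ i ∈ b.vars, i ∈ l := fun i h => hv i (by simp [vars, h])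
      show (evalR (qVar l) a) * (evalR (qVar l) b) = _
      rw [iha hb.1 hva, ihb hb.2 hvb]
      exact Quotient.sound (DerivWcr.refl _)

-- ### completeness

theorem complete {t t' : RTerm n} (ht : BotFree t) (ht' : BotFree t')
    (h : ∀ (F : Type u) [Field F] (σ : Fin n → Option F), t.evalB σ = t'.evalB σ) :
    DerivWcr t t' := by
  classical
  -- Step 1: the two terms have the same variables.
  have hiff : ∀ (j : Fin n) (s : RTerm n), BotFree s →
      (s.evalB (fun i => if i = j then none else some (1 : ULift.{u} ℚ)) = none ↔
        j ∈ s.vars) := by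
    intro j s hb
    rw [evalB_none hb]
    constructor
    · rintro ⟨i, hi, hn⟩
      by_cases hij : i = j
      · exact hij ▸ hi
      · simp [hij] at hn
    · intro hj
      exact ⟨j, hj, by simp⟩
  have hvars : t.vars = t'.vars := by
    ext j
    rw [← hiff j t ht, ← hiff j t' ht',
      h (ULift.{u} ℚ) (fun i => if i = j then none else some 1)]
  -- Step 2: the two terms denote the same integer polynomial.
  have hP : evalR (MvPolynomial.X : Fin n → MvPolynomial (Fin n) ℤ) t =
      evalR (MvPolynomial.X : Fin n → MvPolynomial (Fin n) ℤ) t' := by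
    set K := FractionRing (MvPolynomial (Fin n) ℤ)
    let e : K →+* ULift.{u} K := (ULift.ringEquiv : ULift.{u} K ≃+* K).symm.toRingHom
    have hh := h (ULift.{u} K)
      (fun i => some (e (algebraMap (MvPolynomial (Fin n) ℤ) K (MvPolynomial.X i))))
    rw [evalB_some _ ht, evalB_some _ ht'] at hh
    have hh2 := Option.some.inj hh
    rw [map_evalR e, map_evalR e, map_evalR (algebraMap (MvPolynomial (Fin n) ℤ) K),
      map_evalR (algebraMap (MvPolynomial (Fin n) ℤ) K)] at hh2
    exact IsFractionRing.injective (MvPolynomial (Fin n) ℤ) K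
      ((ULift.ringEquiv : ULift.{u} K ≃+* K).symm.injective hh2)
  -- Step 3: transfer to the quotient ring over the variable list of `t`.
  set l := t.vars.toList with hl
  have hvt : ∀ i ∈ t.vars, i ∈ l := fun i hi => Finset.mem_toList.mpr hi
  have hvt' : ∀ i ∈ t'.vars, i ∈ l := fun i hi => Finset.mem_toList.mpr (hvars ▸ hi)
  have hQ : (Quotient.mk (carSetoid n l) (⟨t, ht, hvt⟩ : Car n l) : Q n l) =
      Quotient.mk (carSetoid n l) (⟨t', ht', hvt'⟩ : Car n l) := by
    refine (evalR_qVar ht hvt).symm.trans ((?_ : _ = evalR (qVar l) t').trans (evalR_qVar ht' hvt'))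
    have := congrArg (MvPolynomial.eval₂Hom (Int.castRingHom (Q n l)) (qVar l)) hP
    rw [← map_evalR, ← map_evalR] at this
    simpa [MvPolynomial.eval₂Hom_X'] using this
  have hder : DerivWcr (Pad l t) (Pad l t') := Quotient.exact hQ
  -- Step 4: strip the padding.
  have h1 : DerivWcr (Pad l t) t :=
    DerivWcr.pad_self ht fun i hi => Finset.mem_toList.mp hi
  have h1' : DerivWcr (Pad l t') t' :=
    DerivWcr.pad_self ht' fun i hi => hvars ▸ Finset.mem_toList.mp hi
  exact (h1.symm.trans hder).trans h1'

end RTerm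

open RTerm in
/-- `E_wcr,⊥` is a complete axiomatisation of the sumterm calculus of fields with
`⊥`: for ring terms `t, t'` (no `⊥`, no division), `E_wcr,⊥ ⊢ t = t'` iff `t` and
`t'` evaluate equally in the `⊥`-enlargement of every field under every valuation. -/
theorem derivWcr_iff_valid_in_all_bot_enlarged_fields (n : ℕ) (t t' : RTerm n)
    (ht : BotFree t) (ht' : BotFree t') :
    DerivWcr t t' ↔
      ∀ (F : Type u) [Field F] (σ : Fin n → Option F), t.evalB σ = t'.evalB σ := by
  constructor
  · intro h F _ σ
    exact sound h σ
  · exact complete ht ht'
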